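/- The map Φ : ℂⁿ ⊃ {Im z_n > f(z')} → ℂⁿ given by z ↦ (1/(i + z_n), z'/(i + z_n)) is well-defined and injective on any domain D ⊂ {(z', z_n) : Im z_n > f(z')} where f : ℂ^{n−1} → [0,∞) is convex with liminf_{‖z'‖→∞} f(z')/‖z'‖ > 0, and the image Φ(D) is bounded. -/

import Mathlib

open Set Complex

theorem stmt_14 {m : ℕ} (f : EuclideanSpace ℂ (Fin m) → ℝ)
    (hconv : ConvexOn ℝ Set.univ f) (hnonneg : ∀ z', 0 ≤ f z')
    -- liminf of `f(z')/‖z'‖` as `‖z'‖ → ∞` is positive :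
    (hgrowth : ∃ c > (0:ℝ), ∃ R : ℝ, ∀ z', R ≤ ‖z'‖ → c * ‖z'‖ ≤ f z')
    (D : Set (EuclideanSpace ℂ (Fin m) × ℂ))
    (hD : D ⊆ {p | f p.1 < p.2.im}) :
    (∀ p ∈ D, Complex.I + p.2 ≠ 0) ∧
      Set.InjOn
        (fun p : EuclideanSpace ℂ (Fin m) × ℂ =>
          ((Complex.I + p.2)⁻¹, (Complex.I + p.2)⁻¹ • p.1)) D ∧
      Bornology.IsBounded
        ((fun p : EuclideanSpace ℂ (Fin m) × ℂ =>
          ((Complex.I + p.2)⁻¹, (Complex.I + p.2)⁻¹ • p.1)) '' D) := by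
  obtain ⟨c, hc, R, hR⟩ := hgrowth
  -- key bound: 1 + f p.1 ≤ |I + p.2| for p ∈ D
  have key : ∀ p ∈ D, 1 + f p.1 ≤ ‖Complex.I + p.2‖ := by
    intro p hp
    have h1 : f p.1 < p.2.im := hD hp
    have h2 : (Complex.I + p.2).im = 1 + p.2.im := by simp
    calc 1 + f p.1 ≤ 1 + p.2.im := by linarith
      _ ≤ |(Complex.I + p.2).im| := by rw [h2]; exact le_abs_self _
      _ ≤ ‖Complex.I + p.2‖ := Complex.abs_im_le_norm _
  have hne : ∀ p ∈ D, Complex.I + p.2 ≠ 0 := by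
    intro p hp h0
    have := key p hp
    rw [h0] at this
    simp at this
    linarith [hnonneg p.1]
  refine ⟨hne, ?_, ?_⟩
  · intro p hp q hq heq
    have h1 : (Complex.I + p.2)⁻¹ = (Complex.I + q.2)⁻¹ := congrArg Prod.fst heq
    have h2 : Complex.I + p.2 = Complex.I + q.2 := by
      have := inv_injective h1; exact this
    have hzn : p.2 = q.2 := by
      have := add_left_cancel h2; exact this
    have h3 : (Complex.I + p.2)⁻¹ • p.1 = (Complex.I + q.2)⁻¹ • q.1 :=
      congrArg Prod.snd heq
    rw [← h2] at h3
    have hinv : (Complex.I + p.2)⁻¹ ≠ 0 := inv_ne_zero (hne p hp)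
    have hz' : p.1 = q.1 := smul_right_injective _ hinv h3
    exact Prod.ext hz' hzn
  · rw [isBounded_iff_forall_norm_le]
    refine ⟨max 1 (max c⁻¹ R), ?_⟩
    rintro w ⟨p, hp, rfl⟩
    have hkey := key p hp
    have habs : (1:ℝ) ≤ ‖Complex.I + p.2‖ :=
      le_trans (by linarith [hnonneg p.1]) hkey
    have hpos : (0:ℝ) < ‖Complex.I + p.2‖ := lt_of_lt_of_le one_pos habs
    have hb1 : ‖(Complex.I + p.2)⁻¹‖ ≤ 1 := by
      rw [norm_inv]
      exact inv_le_one_of_one_le₀ habs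
    have hb2 : ‖(Complex.I + p.2)⁻¹ • p.1‖ ≤ max c⁻¹ R := by
      rw [norm_smul, norm_inv]
      rw [inv_mul_le_iff₀ hpos]
      rcases le_or_gt R ‖p.1‖ with h | h
      · have hf := hR p.1 h
        calc ‖p.1‖ = c⁻¹ * (c * ‖p.1‖) := by field_simp
          _ ≤ max c⁻¹ R * (1 + f p.1) := by
            apply mul_le_mul (le_max_left _ _) (by linarith) (by positivity)
            positivity
          _ ≤ max c⁻¹ R * ‖Complex.I + p.2‖ := by
            apply mul_le_mul_of_nonneg_left hkey (le_trans (by positivity) (le_max_left c⁻¹ R))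
          _ = ‖Complex.I + p.2‖ * max c⁻¹ R := mul_comm _ _
      · calc ‖p.1‖ ≤ R := h.le
          _ = R * 1 := (mul_one R).symm
          _ ≤ max c⁻¹ R * ‖Complex.I + p.2‖ := by
            apply mul_le_mul (le_max_right _ _) habs zero_le_one
            exact le_trans (inv_nonneg.mpr hc.le) (le_max_left _ _)
          _ = ‖Complex.I + p.2‖ * max c⁻¹ R := mul_comm _ _
    calc ‖((Complex.I + p.2)⁻¹, (Complex.I + p.2)⁻¹ • p.1)‖
        = max ‖(Complex.I + p.2)⁻¹‖ ‖(Complex.I + p.2)⁻¹ • p.1‖ := rfl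
      _ ≤ max 1 (max c⁻¹ R) := max_le_max hb1 hb2
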